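/- arXiv:2103.05792 — 3 statements merged into one kernel-verified Lean document; each statement's English description precedes it below -/
import Mathlib

section
/- Schwartz–Zippel lemma: if f is a nonzero multivariate polynomial in n variables over the field ZMod q with total degree at most t, then the number of points x ∈ (ZMod q)^n with f(x) = 0 is at most t·q^(n−1); equivalently, a uniformly random point of (ZMod q)^n is a zero of f with probability at most t/q. -/
open MvPolynomial Finset

lemma sz_univariate {F : Type*} [Field F] [Fintype F] [DecidableEq F]
    (p : Polynomial F) (hp : p ≠ 0) :
    (univ.filter fun y : F => p.eval y = 0).card ≤ p.natDegree := by
  calc (univ.filter fun y : F => p.eval y = 0).card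
      ≤ p.roots.toFinset.card := by
        apply Finset.card_le_card
        intro y hy
        simp only [mem_filter, mem_univ, true_and] at hy
        simp [Multiset.mem_toFinset, Polynomial.mem_roots', hp, Polynomial.IsRoot, hy]
    _ ≤ Multiset.card p.roots := Multiset.toFinset_card_le _
    _ ≤ p.natDegree := Polynomial.card_roots' p

lemma sz_aux (q : ℕ) [Fact (Nat.Prime q)] :
    ∀ (n : ℕ) (f : MvPolynomial (Fin n) (ZMod q)), f ≠ 0 →
      q * (univ.filter fun x : Fin n → ZMod q => eval x f = 0).card
        ≤ f.totalDegree * q ^ n := by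
  intro n
  induction n with
  | zero =>
    intro f hf
    obtain ⟨c, rfl⟩ := MvPolynomial.C_surjective (Fin 0) f
    have hc : c ≠ 0 := fun h => hf (by rw [h, map_zero])
    have : (univ.filter fun x : Fin 0 → ZMod q => eval x (C c) = 0) = ∅ := by
      apply Finset.filter_false_of_mem
      intro x _
      simpa using hc
    simp [this, hc]
  | succ n ih =>
    intro f hf
    set F' := finSuccEquiv (ZMod q) n f with hF'
    have hF'0 : F' ≠ 0 := by
      intro h
      apply hf
      have := congrArg (finSuccEquiv (ZMod q) n).symm h
      simpa [hF'] using this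
    set d := F'.natDegree with hd
    set g := F'.coeff d with hg
    have hg0 : g ≠ 0 := by
      simpa [hg, hd] using Polynomial.leadingCoeff_ne_zero.mpr hF'0
    have hdegs : g.totalDegree + d ≤ f.totalDegree :=
      totalDegree_coeff_finSuccEquiv_add_le f d hg0
    have hcard : (univ.filter fun x : Fin (n+1) → ZMod q => eval x f = 0).card
        = ∑ x' : Fin n → ZMod q,
            (univ.filter fun y : ZMod q => eval (Fin.cons y x') f = 0).card := by
      rw [Finset.card_filter]
      rw [← Fintype.sum_equiv (Fin.consEquiv fun _ => ZMod q)
        (fun p => if eval (Fin.cons p.1 p.2) f = 0 then 1 else 0)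
        (fun x => if eval x f = 0 then 1 else 0) (by intro p; rfl)]
      rw [Fintype.sum_prod_type]
      rw [Finset.sum_comm]
      simp only [Finset.card_filter]
    set bad := univ.filter (fun x' : Fin n → ZMod q => eval x' g = 0) with hbadset
    set good := univ.filter (fun x' : Fin n → ZMod q => ¬ eval x' g = 0) with hgoodset
    have hbad : q * bad.card ≤ g.totalDegree * q ^ n := ih g hg0
    have hbadsum : ∑ x' ∈ bad,
        (univ.filter fun y : ZMod q => eval (Fin.cons y x') f = 0).card ≤ bad.card * q := by
      apply Finset.sum_le_card_nsmul
      intro x' _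
      calc (univ.filter fun y : ZMod q => eval (Fin.cons y x') f = 0).card
          ≤ (univ : Finset (ZMod q)).card := Finset.card_filter_le _ _
        _ = q := by simp [ZMod.card]
    have hgoodsum : ∑ x' ∈ good,
        (univ.filter fun y : ZMod q => eval (Fin.cons y x') f = 0).card ≤ q ^ n * d := by
      calc ∑ x' ∈ good,
          (univ.filter fun y : ZMod q => eval (Fin.cons y x') f = 0).card
          ≤ good.card * d := by
            apply Finset.sum_le_card_nsmul
            intro x' hx'
            simp only [hgoodset, mem_filter, mem_univ, true_and] at hx'
            set p := Polynomial.map (eval x') F' with hp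
            have hp0 : p ≠ 0 := by
              intro h
              apply hx'
              have : p.coeff d = eval x' g := by
                simp [hp, hg, Polynomial.coeff_map]
              rw [h] at this
              simpa using this.symm
            have heq : (univ.filter fun y : ZMod q => eval (Fin.cons y x') f = 0)
                = (univ.filter fun y : ZMod q => p.eval y = 0) := by
              apply Finset.filter_congr
              intro y _
              rw [eval_eq_eval_mv_eval']
            rw [heq]
            exact (sz_univariate p hp0).trans Polynomial.natDegree_map_le
        _ ≤ q ^ n * d := by
            apply Nat.mul_le_mul_right
            calc good.card ≤ (univ : Finset (Fin n → ZMod q)).card := Finset.card_filter_le _ _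
              _ = q ^ n := by simp [ZMod.card]
    have hsplit : (∑ x' : Fin n → ZMod q,
          (univ.filter fun y : ZMod q => eval (Fin.cons y x') f = 0).card)
        = (∑ x' ∈ bad, (univ.filter fun y : ZMod q => eval (Fin.cons y x') f = 0).card)
          + ∑ x' ∈ good, (univ.filter fun y : ZMod q => eval (Fin.cons y x') f = 0).card :=
      (Finset.sum_filter_add_sum_filter_not univ _ _).symm
    calc q * (univ.filter fun x : Fin (n+1) → ZMod q => eval x f = 0).card
        = q * ((∑ x' ∈ bad, (univ.filter fun y : ZMod q => eval (Fin.cons y x') f = 0).card)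
          + ∑ x' ∈ good, (univ.filter fun y : ZMod q => eval (Fin.cons y x') f = 0).card) := by
          rw [hcard, hsplit]
      _ ≤ q * (bad.card * q + q ^ n * d) :=
          Nat.mul_le_mul_left _ (Nat.add_le_add hbadsum hgoodsum)
      _ = (q * bad.card) * q + d * q ^ (n+1) := by ring
      _ ≤ (g.totalDegree * q ^ n) * q + d * q ^ (n+1) :=
          Nat.add_le_add_right (Nat.mul_le_mul_right _ hbad) _
      _ = (g.totalDegree + d) * q ^ (n+1) := by ring
      _ ≤ f.totalDegree * q ^ (n+1) := Nat.mul_le_mul_right _ hdegs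

/-- Schwartz–Zippel lemma over `ZMod q`: a nonzero multivariate polynomial `f` in `n`
variables of total degree at most `t` has at most `t * q ^ (n - 1)` zeros in
`(ZMod q)^n`; equivalently, a uniformly random point is a zero of `f` with
probability at most `t / q`. -/
theorem schwartz_zippel_zmod (q : ℕ) [Fact (Nat.Prime q)] (n t : ℕ)
    (f : MvPolynomial (Fin n) (ZMod q)) (hf : f ≠ 0) (hdeg : f.totalDegree ≤ t) :
    (Finset.univ.filter fun x : Fin n → ZMod q => MvPolynomial.eval x f = 0).card
      ≤ t * q ^ (n - 1) ∧
    ((Finset.univ.filter fun x : Fin n → ZMod q =>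
        MvPolynomial.eval x f = 0).card : ℝ) / (q : ℝ) ^ n ≤ (t : ℝ) / q := by
  have hq : 0 < q := (Fact.out : Nat.Prime q).pos
  set c := (Finset.univ.filter fun x : Fin n → ZMod q => MvPolynomial.eval x f = 0).card with hc
  have key : q * c ≤ t * q ^ n :=
    (sz_aux q n f hf).trans (Nat.mul_le_mul_right _ hdeg)
  constructor
  · match n with
    | 0 =>
      have : c ≤ q * c := Nat.le_mul_of_pos_left c hq
      simpa using this.trans key
    | Nat.succ m =>
      have : q * c ≤ q * (t * q ^ m) := by
        calc q * c ≤ t * q ^ (m + 1) := key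
          _ = q * (t * q ^ m) := by ring
      simpa using Nat.le_of_mul_le_mul_left this hq
  · have hqR : (0 : ℝ) < q := by exact_mod_cast hq
    rw [div_le_div_iff₀ (by positivity) hqR]
    calc (c : ℝ) * q = ((q * c : ℕ) : ℝ) := by push_cast; ring
      _ ≤ ((t * q ^ n : ℕ) : ℝ) := Nat.cast_le.mpr key
      _ = (t : ℝ) * q ^ n := by push_cast; ring
end

section
/- Decryption exponent of Secure Join: let B be an invertible (m(t+1)+3)×(m(t+1)+3) matrix over ZMod q and B* := det(B)·(B⁻¹)ᵀ. For the row encoding w = (h, γ₂·a₁⁰,…,γ₂·a₁ᵗ, …, γ₂·a_m⁰,…,γ₂·a_mᵗ, γ₁, 0) and token encoding v = (k, p_{1,0},…,p_{1,t}, …, p_{m,0},…,p_{m,t}, 0, δ), the inner product of the transformed vectors satisfies ⟨v·B, w·B*⟩ = det(B) · (k·h + γ₂ · ∑_{i=1}^{m} P_i(a_i)), where v·B denotes Matrix.vecMul and P_i is the polynomial with coefficients p_{i,0},…,p_{i,t}. -/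
open Matrix

/-- Index type for Secure Join vectors: one join-value slot, `m(t+1)` attribute-power
slots (attribute `i`, power `j ∈ {0,…,t}`), and two randomizer slots; its
cardinality is `m(t+1)+3`. -/
abbrev SJIndex (m t : ℕ) : Type := Unit ⊕ (Fin m × Fin (t + 1)) ⊕ Fin 2

/-- Row encoding `w = (h, γ₂·a₁⁰,…,γ₂·a₁ᵗ, …, γ₂·a_m⁰,…,γ₂·a_mᵗ, γ₁, 0)`. -/
def sjRow {q m t : ℕ} (h γ₁ γ₂ : ZMod q) (a : Fin m → ZMod q) :
    SJIndex m t → ZMod q :=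
  Sum.elim (fun _ => h) (Sum.elim (fun p => γ₂ * a p.1 ^ (p.2 : ℕ)) ![γ₁, 0])

/-- Token encoding `v = (k, p_{1,0},…,p_{1,t}, …, p_{m,0},…,p_{m,t}, 0, δ)`. -/
def sjToken {q m t : ℕ} (k δ : ZMod q) (p : Fin m → Fin (t + 1) → ZMod q) :
    SJIndex m t → ZMod q :=
  Sum.elim (fun _ => k) (Sum.elim (fun pr => p pr.1 pr.2) ![0, δ])

lemma vecMul_smul_matrix {n : Type*} [Fintype n] {R : Type*} [CommRing R]
    (c : R) (M : Matrix n n R) (v : n → R) :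
    Matrix.vecMul v (c • M) = c • Matrix.vecMul v M := by
  ext i
  simp [Matrix.vecMul, dotProduct, Finset.mul_sum, mul_left_comm]

/-- Decryption exponent of Secure Join: for invertible `B` and `B* = det B • (B⁻¹)ᵀ`,
`⟨v·B, w·B*⟩ = det B · (k·h + γ₂·∑ᵢ Pᵢ(aᵢ))`, where `Pᵢ(x) = ∑ⱼ p_{i,j} xʲ`. -/
theorem sj_decryption_exponent (q : ℕ) [Fact (Nat.Prime q)] (m t : ℕ)
    (h γ₁ γ₂ k δ : ZMod q) (a : Fin m → ZMod q)
    (p : Fin m → Fin (t + 1) → ZMod q)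
    (B : Matrix (SJIndex m t) (SJIndex m t) (ZMod q)) (hB : IsUnit B.det) :
    (Matrix.vecMul (sjToken (q := q) (m := m) (t := t) k δ p) B) ⬝ᵥ
        (Matrix.vecMul (sjRow h γ₁ γ₂ a) (B.det • (B⁻¹)ᵀ))
      = B.det * (k * h + γ₂ * ∑ i, ∑ j : Fin (t + 1), p i j * a i ^ (j : ℕ)) := by
  have key : (Matrix.vecMul (sjToken (q := q) (m := m) (t := t) k δ p) B) ⬝ᵥ
      (Matrix.vecMul (sjRow h γ₁ γ₂ a) (B.det • (B⁻¹)ᵀ)) =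
      B.det * (sjToken (q := q) (m := m) (t := t) k δ p ⬝ᵥ sjRow h γ₁ γ₂ a) := by
    rw [← Matrix.dotProduct_mulVec, vecMul_smul_matrix, Matrix.vecMul_transpose,
      Matrix.mulVec_smul, Matrix.mulVec_mulVec, Matrix.mul_nonsing_inv _ hB,
      Matrix.one_mulVec, dotProduct_smul, smul_eq_mul]
  rw [key]
  congr 1
  simp [sjToken, sjRow, dotProduct, Fin.sum_univ_two, Finset.mul_sum, mul_assoc,
    mul_left_comm (γ₂ : ZMod q), Fintype.sum_prod_type]
end

section
/- Correctness of the function-hiding inner-product encryption decryption: under the bilinear pairing law, let B be an invertible n×n matrix over ZMod q, B* := det(B)·(B⁻¹)ᵀ, and let α, β ∈ ZMod q be nonzero with det(B) ≠ 0 in ZMod q. For v, w ∈ (ZMod q)^n set K₁ = g₁^{(α·det B).val}, K₂ᵢ = g₁^{((α·(v·B))ᵢ).val}, C₁ = g₂^{β.val}, C₂ᵢ = g₂^{((β·(w·B*))ᵢ).val}, and define D₁ = e(K₁, C₁) and D₂ = ∏ᵢ e(K₂ᵢ, C₂ᵢ). If ε has order q, then D₁ = ε^{(α·β·det B).val}, D₂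 = ε^{(α·β·det B·⟨v,w⟩).val}, and for every z ∈ ZMod q, D₁^{z.val} = D₂ if and only if z = ⟨v, w⟩, where ⟨v,w⟩ = ∑_i v_i·w_i and v·B denotes Matrix.vecMul. -/
open Matrix

/-- Correctness of function-hiding inner-product encryption decryption:
with `K₁ = g₁^{(α·det B).val}`, `K₂ᵢ = g₁^{(α·(v·B))ᵢ.val}`, `C₁ = g₂^{β.val}`,
`C₂ᵢ = g₂^{(β·(w·B*))ᵢ.val}` where `B* = det B • (B⁻¹)ᵀ`, the decryption values are
`D₁ = ε^{(α·β·det B).val}` and `D₂ = ε^{(α·β·det B·⟨v,w⟩).val}`, and for every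
`z : ZMod q`, `D₁^{z.val} = D₂` iff `z = ⟨v, w⟩`. -/
theorem ipe_decrypt_correct (q : ℕ) [Fact (Nat.Prime q)]
    {G₁ G₂ GT : Type*} [CommGroup G₁] [CommGroup G₂] [CommGroup GT]
    (g₁ : G₁) (g₂ : G₂) (e : G₁ → G₂ → GT)
    (hbil : ∀ x y : ℤ, e (g₁ ^ x) (g₂ ^ y) = (e g₁ g₂) ^ (x * y))
    (hord : orderOf (e g₁ g₂) = q)
    (n : ℕ) (B : Matrix (Fin n) (Fin n) (ZMod q)) (hB : IsUnit B.det)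
    (hBdet : B.det ≠ 0) (α β : ZMod q) (hα : α ≠ 0) (hβ : β ≠ 0)
    (v w : Fin n → ZMod q) :
    e (g₁ ^ (α * B.det).val) (g₂ ^ β.val)
        = (e g₁ g₂) ^ (α * β * B.det).val ∧
    (∏ i, e (g₁ ^ (α * Matrix.vecMul v B i).val)
          (g₂ ^ (β * Matrix.vecMul w (B.det • (B⁻¹)ᵀ) i).val))
        = (e g₁ g₂) ^ (α * β * B.det * (v ⬝ᵥ w)).val ∧
    ∀ z : ZMod q,
      (e (g₁ ^ (α * B.det).val) (g₂ ^ β.val)) ^ z.val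
          = (∏ i, e (g₁ ^ (α * Matrix.vecMul v B i).val)
              (g₂ ^ (β * Matrix.vecMul w (B.det • (B⁻¹)ᵀ) i).val))
        ↔ z = v ⬝ᵥ w := by
  set ε := e g₁ g₂ with hε
  -- reduce natural exponents mod q
  have hN : ∀ m : ℕ, ε ^ m = ε ^ ((m : ZMod q)).val := by
    intro m
    rw [pow_eq_pow_iff_modEq, hord, ZMod.val_natCast]
    exact (Nat.mod_modEq m q).symm
  -- injectivity of x ↦ ε ^ x.val
  have hinj : ∀ a b : ZMod q, ε ^ a.val = ε ^ b.val ↔ a = b := by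
    intro a b
    rw [pow_eq_pow_iff_modEq, hord, Nat.ModEq]
    rw [Nat.mod_eq_of_lt a.val_lt, Nat.mod_eq_of_lt b.val_lt]
    exact ⟨fun h => ZMod.val_injective q h, fun h => h ▸ rfl⟩
  -- bilinearity over ZMod q vals
  have hE : ∀ a b : ZMod q, e (g₁ ^ a.val) (g₂ ^ b.val) = ε ^ (a * b).val := by
    intro a b
    have := hbil (a.val : ℤ) (b.val : ℤ)
    rw [zpow_natCast, zpow_natCast, ← Int.natCast_mul, zpow_natCast] at this
    rw [this, hN (a.val * b.val)]
    congr 1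
    push_cast [ZMod.natCast_val, ZMod.cast_id]
    rfl
  -- the matrix identity
  have hmat : Matrix.vecMul v B ⬝ᵥ Matrix.vecMul w (B.det • (B⁻¹)ᵀ) = B.det * (v ⬝ᵥ w) := by
    have h1 : Matrix.vecMul w (B.det • (B⁻¹)ᵀ) = B.det • (B⁻¹ *ᵥ w) := by
      ext i
      simp only [Matrix.vecMul, Matrix.mulVec, dotProduct, Matrix.smul_apply,
        Matrix.transpose_apply, Pi.smul_apply, smul_eq_mul, Finset.sum_mul,
        Finset.mul_sum]
      exact Finset.sum_congr rfl fun j _ => by ring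
    rw [h1, dotProduct_smul, Matrix.dotProduct_mulVec, Matrix.vecMul_vecMul,
      Matrix.mul_nonsing_inv B hB, Matrix.vecMul_one, smul_eq_mul]
  have hD1 : e (g₁ ^ (α * B.det).val) (g₂ ^ β.val) = ε ^ (α * β * B.det).val := by
    rw [hE]; congr 1; ring
  have hD2 : (∏ i, e (g₁ ^ (α * Matrix.vecMul v B i).val)
        (g₂ ^ (β * Matrix.vecMul w (B.det • (B⁻¹)ᵀ) i).val))
      = ε ^ (α * β * B.det * (v ⬝ᵥ w)).val := by
    have : ∀ i, e (g₁ ^ (α * Matrix.vecMul v B i).val)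
        (g₂ ^ (β * Matrix.vecMul w (B.det • (B⁻¹)ᵀ) i).val)
        = ε ^ ((α * Matrix.vecMul v B i) * (β * Matrix.vecMul w (B.det • (B⁻¹)ᵀ) i)).val := by
      intro i; rw [hE]
    rw [Finset.prod_congr rfl (fun i _ => this i), Finset.prod_pow_eq_pow_sum]
    rw [hN]
    congr 1
    push_cast [ZMod.natCast_val, ZMod.cast_id]
    have : ∑ i, (α * Matrix.vecMul v B i) * (β * Matrix.vecMul w (B.det • (B⁻¹)ᵀ) i)
        = α * β * (Matrix.vecMul v B ⬝ᵥ Matrix.vecMul w (B.det • (B⁻¹)ᵀ)) := by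
      rw [dotProduct, Finset.mul_sum]
      exact Finset.sum_congr rfl (fun i _ => by ring)
    rw [this, hmat]; ring
  refine ⟨hD1, hD2, fun z => ?_⟩
  rw [hD1, hD2, ← pow_mul, hN]
  have hcast : (((α * β * B.det).val * z.val : ℕ) : ZMod q) = α * β * B.det * z := by
    push_cast [ZMod.natCast_val, ZMod.cast_id]; rfl
  rw [hcast, hinj]
  have hne : α * β * B.det ≠ 0 := by
    exact mul_ne_zero (mul_ne_zero hα hβ) hBdet
  constructor
  · intro h; exact mul_left_cancel₀ hne h
  · intro h; rw [h]
end
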